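/- Let F : ℝ² × ℝ → ℝ be C¹ and θ : ℝ² → ℝ² be C¹ with compact support, Ω ⊂ ℝ² bounded open. Define I(η) = ∫_{(id+ηθ)(Ω)} F(x,η) dx. Then I'(0) = ∫_Ω (F⋆(x) + F(x,0) div θ(x)) dx, where F⋆(x) = ∂_η F(x,0) + ∇F(x,0)·θ(x) is the material derivative. -/

import Mathlib

open MeasureTheory InnerProductSpace Metric
open scoped RealInnerProductSpace

noncomputable abbrev ee (i : Fin 2) : EuclideanSpace ℝ (Fin 2) := EuclideanSpace.single i 1

lemma coord_le (v : EuclideanSpace ℝ (Fin 2)) (i : Fin 2) : |v i| ≤ ‖v‖ := by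
  have h : v i = ⟪ee i, v⟫ := by simp [ee, EuclideanSpace.inner_single_left]
  rw [h]
  calc |⟪ee i, v⟫| ≤ ‖ee i‖ * ‖v‖ := abs_real_inner_le_norm _ _
    _ = ‖v‖ := by simp [ee, EuclideanSpace.norm_single]

lemma detformula (L : EuclideanSpace ℝ (Fin 2) →L[ℝ] EuclideanSpace ℝ (Fin 2)) (t : ℝ) :
    (ContinuousLinearMap.id ℝ (EuclideanSpace ℝ (Fin 2)) + t • L).det
      = 1 + t * (L (ee 0) 0 + L (ee 1) 1)
        + t^2 * (L (ee 0) 0 * L (ee 1) 1 - L (ee 1) 0 * L (ee 0) 1) := by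
  rw [ContinuousLinearMap.det]
  rw [← LinearMap.det_toMatrix (EuclideanSpace.basisFun (Fin 2) ℝ).toBasis]
  rw [Matrix.det_fin_two]
  simp [LinearMap.toMatrix_apply, EuclideanSpace.basisFun_apply, ee]
  ring

lemma grad_decomp (F : EuclideanSpace ℝ (Fin 2) → ℝ → ℝ)
    (hF : ContDiff ℝ 1 (fun p : EuclideanSpace ℝ (Fin 2) × ℝ => F p.1 p.2))
    (x v : EuclideanSpace ℝ (Fin 2)) :
    deriv (fun t => F x t) 0 + ⟪gradient (fun y => F y 0) x, v⟫
      = fderiv ℝ (fun p : EuclideanSpace ℝ (Fin 2) × ℝ => F p.1 p.2) (x, 0) (v, 1) := by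
  set Fp := fun p : EuclideanSpace ℝ (Fin 2) × ℝ => F p.1 p.2 with hFp
  have hD : HasFDerivAt Fp (fderiv ℝ Fp (x, 0)) (x, 0) :=
    (hF.differentiable one_ne_zero (x, 0)).hasFDerivAt
  set D := fderiv ℝ Fp (x, 0)
  have h1 : HasDerivAt (fun t => F x t) (D (0, 1)) 0 := by
    have hc : HasDerivAt (fun t : ℝ => ((x : EuclideanSpace ℝ (Fin 2)), t)) (0, 1) 0 :=
      (hasDerivAt_const 0 x).prodMk (hasDerivAt_id 0)
    exact hD.comp_hasDerivAt 0 hc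
  have h2 : HasFDerivAt (fun y => F y 0)
      (D.comp ((ContinuousLinearMap.id ℝ _).prod 0)) x := by
    have hc : HasFDerivAt (fun y : EuclideanSpace ℝ (Fin 2) => (y, (0 : ℝ)))
        ((ContinuousLinearMap.id ℝ _).prod 0) x :=
      (hasFDerivAt_id x).prodMk (hasFDerivAt_const 0 x)
    exact hD.comp x hc
  have h3 : ⟪gradient (fun y => F y 0) x, v⟫ = D (v, 0) := by
    rw [gradient, InnerProductSpace.toDual_symm_apply, h2.fderiv]
    simp
  rw [h1.deriv, h3, ← map_add]
  norm_num

/-- Divergence of a vector field on ℝ². -/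
noncomputable def vdiv (θ : EuclideanSpace ℝ (Fin 2) → EuclideanSpace ℝ (Fin 2))
    (x : EuclideanSpace ℝ (Fin 2)) : ℝ :=
  ∑ i, fderiv ℝ θ x (EuclideanSpace.single i 1) i

set_option maxHeartbeats 2000000 in
/-- material differentiation of a domain integral.
`I(η) = ∫_{(id+ηθ)(Ω)} F(x,η) dx` satisfies
`I'(0) = ∫_Ω (F⋆ + F(·,0) div θ)`, with `F⋆(x) = ∂_η F(x,0) + ∇F(x,0)·θ(x)`. -/
theorem material_differentiation_of_volume_integral
    (Ω : Set (EuclideanSpace ℝ (Fin 2)))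
    (hΩo : IsOpen Ω) (hΩb : Bornology.IsBounded Ω)
    (F : EuclideanSpace ℝ (Fin 2) → ℝ → ℝ)
    (hF : ContDiff ℝ 1 (fun p : EuclideanSpace ℝ (Fin 2) × ℝ => F p.1 p.2))
    (θ : EuclideanSpace ℝ (Fin 2) → EuclideanSpace ℝ (Fin 2))
    (hθ : ContDiff ℝ 1 θ) (hθc : HasCompactSupport θ)
    (I : ℝ → ℝ)
    (hI : ∀ η, I η = ∫ x in (fun x => x + η • θ x) '' Ω, F x η) :
    HasDerivAt I
      (∫ x in Ω,
        (deriv (fun t => F x t) 0 + ⟪gradient (fun y => F y 0) x, θ x⟫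
          + F x 0 * vdiv θ x)) 0 := by
  classical
  set Fp := fun p : EuclideanSpace ℝ (Fin 2) × ℝ => F p.1 p.2 with hFp
  obtain ⟨Cθ, hCθ⟩ := hθc.exists_bound_of_continuous hθ.continuous
  have hCθ0 : 0 ≤ Cθ := le_trans (norm_nonneg _) (hCθ 0)
  set L := fun x => fderiv ℝ θ x with hLdef
  have hLc : Continuous L := hθ.continuous_fderiv one_ne_zero
  obtain ⟨CL, hCL⟩ := (hθc.fderiv ℝ).exists_bound_of_continuous hLc
  have hCL0 : 0 ≤ CL := le_trans (norm_nonneg _) (hCL 0)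
  obtain ⟨ε, hε, hε1, hεhalf, hεCL, hεCL2⟩ :
      ∃ ε : ℝ, 0 < ε ∧ ε ≤ 1 ∧ ε * CL ≤ 1/2 ∧ ε * (2*CL) ≤ 1/4 ∧ ε * (2*CL^2) ≤ 1/4 := by
    set c : ℝ := 8*(CL+1)^2 with hcdef
    have hc0 : (0:ℝ) < c := by positivity
    have hmr : min 1 (1/c) ≤ 1/c := min_le_right _ _
    have hm1 : min 1 (1/c) ≤ 1 := min_le_left _ _
    have hm0 : (0:ℝ) < min 1 (1/c) := lt_min one_pos (by positivity)
    refine ⟨min 1 (1/c), hm0, hm1, ?_, ?_, ?_⟩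
    · calc min 1 (1/c) * CL ≤ (1/c) * CL := by gcongr
        _ = CL / c := by ring
        _ ≤ 1/2 := by rw [div_le_iff₀ hc0, hcdef]; nlinarith [sq_nonneg CL]
    · calc min 1 (1/c) * (2*CL) ≤ (1/c) * (2*CL) := by gcongr
        _ = 2*CL / c := by ring
        _ ≤ 1/4 := by rw [div_le_iff₀ hc0, hcdef]; nlinarith [sq_nonneg CL]
    · calc min 1 (1/c) * (2*CL^2) ≤ (1/c) * (2*CL^2) := by gcongr
        _ = 2*CL^2 / c := by ring
        _ ≤ 1/4 := by rw [div_le_iff₀ hc0, hcdef]; nlinarith [sq_nonneg CL]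
  -- entry bounds
  have hentry : ∀ x i j, |L x (ee i) j| ≤ CL := by
    intro x i j
    refine (coord_le _ j).trans (((L x).le_opNorm _).trans ?_)
    have : ‖ee i‖ = 1 := by simp [ee, EuclideanSpace.norm_single]
    rw [this, mul_one]; exact hCL x
  set q : EuclideanSpace ℝ (Fin 2) → ℝ := fun x => L x (ee 0) 0 * L x (ee 1) 1 - L x (ee 1) 0 * L x (ee 0) 1 with hqdef
  have hqb : ∀ x, |q x| ≤ 2 * CL ^ 2 := by
    intro x
    have h00 := hentry x 0 0; have h11 := hentry x 1 1
    have h10 := hentry x 1 0; have h01 := hentry x 0 1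
    calc |q x| ≤ |L x (ee 0) 0 * L x (ee 1) 1| + |L x (ee 1) 0 * L x (ee 0) 1| :=
          abs_sub _ _
      _ ≤ CL * CL + CL * CL := by
          rw [abs_mul, abs_mul]
          exact add_le_add (mul_le_mul h00 h11 (abs_nonneg _) hCL0)
            (mul_le_mul h10 h01 (abs_nonneg _) hCL0)
      _ = 2 * CL ^ 2 := by ring
  have hvdiv : ∀ x, vdiv θ x = L x (ee 0) 0 + L x (ee 1) 1 := by
    intro x; simp [vdiv, Fin.sum_univ_two, ee, hLdef]
  have hvb : ∀ x, |vdiv θ x| ≤ 2 * CL := by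
    intro x
    rw [hvdiv]
    calc |L x (ee 0) 0 + L x (ee 1) 1| ≤ |L x (ee 0) 0| + |L x (ee 1) 1| := abs_add_le _ _
      _ ≤ CL + CL := add_le_add (hentry x 0 0) (hentry x 1 1)
      _ = 2 * CL := by ring
  set δ := fun (t : ℝ) x => 1 + t * vdiv θ x + t ^ 2 * q x with hδdef
  have hδpos : ∀ t ∈ ball (0:ℝ) ε, ∀ x, (1:ℝ)/2 ≤ δ t x := by
    intro t ht x
    rw [mem_ball, dist_zero_right, Real.norm_eq_abs] at ht
    have h1 : |t * vdiv θ x| ≤ ε * (2*CL) := by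
      rw [abs_mul]; exact mul_le_mul ht.le (hvb x) (abs_nonneg _) hε.le
    have h2 : |t ^ 2 * q x| ≤ ε * (2*CL^2) := by
      rw [abs_mul, abs_pow]
      have ht2 : |t|^2 ≤ ε := by nlinarith [abs_nonneg t, hε1]
      exact mul_le_mul ht2 (hqb x) (abs_nonneg _) hε.le
    have hb1 := (abs_le.1 h1).1
    have hb2 := (abs_le.1 h2).1
    show (1:ℝ)/2 ≤ 1 + t * vdiv θ x + t ^ 2 * q x
    refine le_trans ?_ (add_le_add (add_le_add le_rfl hb1) hb2)
    linarith only [hεCL, hεCL2]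
  have hδle : ∀ t ∈ ball (0:ℝ) ε, ∀ x, |δ t x| ≤ 2 := by
    intro t ht x
    rw [mem_ball, dist_zero_right, Real.norm_eq_abs] at ht
    have h1 : |t * vdiv θ x| ≤ ε * (2*CL) := by
      rw [abs_mul]; exact mul_le_mul ht.le (hvb x) (abs_nonneg _) hε.le
    have h2 : |t ^ 2 * q x| ≤ ε * (2*CL^2) := by
      rw [abs_mul, abs_pow]
      have ht2 : |t|^2 ≤ ε := by nlinarith [abs_nonneg t, hε1]
      exact mul_le_mul ht2 (hqb x) (abs_nonneg _) hε.le
    have hεCL' := abs_le.1 h1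
    have hεCL2' := abs_le.1 h2
    rw [abs_le]; constructor <;> simp only [hδdef] <;> linarith [hεCL'.1, hεCL'.2, hεCL2'.1, hεCL2'.2]
  -- derivative of Φ_t
  have hΦd : ∀ (t : ℝ) x, HasFDerivAt (fun y => y + t • θ y)
      (ContinuousLinearMap.id ℝ (EuclideanSpace ℝ (Fin 2)) + t • L x) x := by
    intro t x
    exact (hasFDerivAt_id x).add (((hθ.differentiable one_ne_zero x).hasFDerivAt).const_smul t)
  have hdet : ∀ (t : ℝ) x,
      (ContinuousLinearMap.id ℝ (EuclideanSpace ℝ (Fin 2)) + t • L x).det = δ t x := by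
    intro t x
    rw [detformula]
    simp only [hδdef, hqdef, hvdiv]
  -- injectivity
  have hlip : LipschitzWith CL.toNNReal θ := by
    apply lipschitzWith_of_nnnorm_fderiv_le (hθ.differentiable one_ne_zero)
    intro x
    rw [← Real.toNNReal_coe (r := ‖fderiv ℝ θ x‖₊)]
    exact Real.toNNReal_mono (hCL x)
  have hinj : ∀ t ∈ ball (0:ℝ) ε, Function.Injective (fun y => y + t • θ y) := by
    intro t ht x y hxy
    rw [mem_ball, dist_zero_right, Real.norm_eq_abs] at ht
    have hxy' : x + t • θ x = y + t • θ y := hxy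
    have h1 : x - y = t • (θ y - θ x) := by
      rw [smul_sub]
      linear_combination (norm := module) hxy'
    have hth := hlip.dist_le_mul y x
    rw [dist_eq_norm, dist_eq_norm] at hth
    have h2 : ‖x - y‖ ≤ |t| * (CL * ‖x - y‖) := by
      calc ‖x - y‖ = |t| * ‖θ y - θ x‖ := by rw [h1, norm_smul, Real.norm_eq_abs]
        _ ≤ |t| * (CL * ‖y - x‖) := by
            gcongr
            exact hth.trans (by rw [Real.coe_toNNReal CL hCL0])
        _ = |t| * (CL * ‖x - y‖) := by rw [norm_sub_rev]
    have h3 : |t| * CL ≤ 1/2 := by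
      have h4 : |t| * CL ≤ ε * CL := by gcongr
      linarith
    have h4 : ‖x - y‖ = 0 := by nlinarith [norm_nonneg (x - y)]
    exact sub_eq_zero.1 (norm_eq_zero.1 h4)
  -- change of variables
  set J := fun t : ℝ => ∫ x in Ω, δ t x * F (x + t • θ x) t with hJdef
  have hIJ : ∀ t ∈ ball (0:ℝ) ε, I t = J t := by
    intro t ht
    rw [hI t, hJdef]
    rw [integral_image_eq_integral_abs_det_fderiv_smul volume hΩo.measurableSet
      (fun x _ => (hΦd t x).hasFDerivWithinAt) ((hinj t ht).injOn) (fun x => F x t)]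
    refine integral_congr_ae (Filter.Eventually.of_forall fun x => ?_)
    dsimp only
    rw [hdet, abs_of_pos (lt_of_lt_of_le (by norm_num) (hδpos t ht x)), smul_eq_mul]
  -- continuity facts
  have hFpc : Continuous Fp := hF.continuous
  have hcoord : ∀ i j : Fin 2, Continuous fun x => L x (ee i) j := by
    intro i j
    have h1 : Continuous fun x =>
        (EuclideanSpace.proj j : EuclideanSpace ℝ (Fin 2) →L[ℝ] ℝ) (L x (ee i)) :=
      (EuclideanSpace.proj j).continuous.comp (hLc.clm_apply continuous_const)
    exact h1
  have hvc : Continuous (vdiv θ) := by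
    have h : (vdiv θ) = fun x => L x (ee 0) 0 + L x (ee 1) 1 := funext hvdiv
    rw [h]; exact (hcoord 0 0).add (hcoord 1 1)
  have hqc : Continuous q := by
    rw [hqdef]
    exact ((hcoord 0 0).mul (hcoord 1 1)).sub ((hcoord 1 0).mul (hcoord 0 1))
  have hδc : ∀ t, Continuous fun x => δ t x := by
    intro t
    simp only [hδdef]
    exact (continuous_const.add (continuous_const.mul hvc)).add (continuous_const.mul hqc)
  have hΦc : ∀ t : ℝ, Continuous fun x => x + t • θ x := fun t =>
    continuous_id.add (hθ.continuous.const_smul t)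
  have hGc : ∀ t : ℝ, Continuous fun x => δ t x * F (x + t • θ x) t := fun t =>
    (hδc t).mul (hFpc.comp ((hΦc t).prodMk continuous_const))
  -- finite measure
  obtain ⟨R, hR⟩ := hΩb.subset_closedBall 0
  have hΩfin : volume Ω < ⊤ :=
    lt_of_le_of_lt (measure_mono hR) measure_closedBall_lt_top
  have hΩcc : IsCompact (closure Ω) :=
    Metric.isCompact_of_isClosed_isBounded isClosed_closure hΩb.closure
  -- compact region and bounds
  set ρ : ℝ := max R 0 + Cθ + 1 with hρdef
  have hmax0 : (0:ℝ) ≤ max R 0 := le_max_right R 0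
  have hρ0 : 0 ≤ ρ := by rw [hρdef]; linarith
  set S : Set (EuclideanSpace ℝ (Fin 2) × ℝ) := Metric.closedBall 0 ρ with hSdef
  have hSc : IsCompact S := isCompact_closedBall 0 ρ
  obtain ⟨CF, hCF⟩ := hSc.exists_bound_of_continuousOn (hF.continuous_fderiv one_ne_zero).continuousOn
  obtain ⟨CFv, hCFv⟩ := hSc.exists_bound_of_continuousOn hFpc.continuousOn
  have h0S : (0 : EuclideanSpace ℝ (Fin 2) × ℝ) ∈ S := by
    rw [hSdef, Metric.mem_closedBall, dist_self]; exact hρ0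
  have hCF0 : 0 ≤ CF := (norm_nonneg _).trans (hCF 0 h0S)
  have hCFv0 : 0 ≤ CFv := (norm_nonneg _).trans (hCFv 0 h0S)
  have hmem : ∀ x ∈ Ω, ∀ t ∈ ball (0:ℝ) ε, ((x + t • θ x, t) :
      EuclideanSpace ℝ (Fin 2) × ℝ) ∈ S := by
    intro x hx t ht
    rw [mem_ball, dist_zero_right, Real.norm_eq_abs] at ht
    have ht1 : |t| ≤ 1 := ht.le.trans hε1
    have hx' : ‖x‖ ≤ max R 0 := by
      have h := hR hx
      rw [Metric.mem_closedBall, dist_zero_right] at h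
      exact h.trans (le_max_left _ _)
    have h1 : ‖x + t • θ x‖ ≤ max R 0 + Cθ := by
      calc ‖x + t • θ x‖ ≤ ‖x‖ + ‖t • θ x‖ := norm_add_le _ _
        _ ≤ max R 0 + Cθ := by
            rw [norm_smul, Real.norm_eq_abs]
            have h2 : |t| * ‖θ x‖ ≤ 1 * Cθ :=
              mul_le_mul ht1 (hCθ x) (norm_nonneg _) one_pos.le
            rw [one_mul] at h2
            exact add_le_add hx' h2
    rw [hSdef, Metric.mem_closedBall, dist_zero_right, Prod.norm_def]
    apply max_le
    · simp only; rw [hρdef]; exact h1.trans (by linarith)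
    · simp only [Real.norm_eq_abs]; rw [hρdef]; linarith
  -- curve derivatives
  have hcurve : ∀ (x : EuclideanSpace ℝ (Fin 2)) (t : ℝ),
      HasDerivAt (fun s : ℝ => ((x + s • θ x, s) : EuclideanSpace ℝ (Fin 2) × ℝ)) (θ x, 1) t := by
    intro x t
    have h1 : HasDerivAt (fun s : ℝ => x + s • θ x) (θ x) t := by
      have h2 := ((hasDerivAt_id t).smul_const (θ x)).const_add x
      simpa using h2
    exact h1.prodMk (hasDerivAt_id t)
  have hG1 : ∀ (x : EuclideanSpace ℝ (Fin 2)) (t : ℝ), HasDerivAt (fun s => F (x + s • θ x) s)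
      (fderiv ℝ Fp (x + t • θ x, t) (θ x, 1)) t := by
    intro x t
    exact ((hF.differentiable one_ne_zero _).hasFDerivAt).comp_hasDerivAt t (hcurve x t)
  have hG2 : ∀ (x : EuclideanSpace ℝ (Fin 2)) (t : ℝ),
      HasDerivAt (fun s => δ s x) (vdiv θ x + 2 * t * q x) t := by
    intro x t
    have h1 : HasDerivAt (fun s : ℝ => 1 + s * vdiv θ x + s ^ 2 * q x)
        ((0 + 1 * vdiv θ x) + (↑2 * t ^ 1) * q x) t :=
      ((hasDerivAt_const t 1).add ((hasDerivAt_id t).mul_const _)).add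
        ((hasDerivAt_pow 2 t).mul_const _)
    simp only [hδdef]
    convert h1 using 1
    push_cast
    ring
  set G' : ℝ → EuclideanSpace ℝ (Fin 2) → ℝ := fun t x =>
    (vdiv θ x + 2 * t * q x) * F (x + t • θ x) t
      + δ t x * fderiv ℝ Fp (x + t • θ x, t) (θ x, 1) with hG'def
  have hGd : ∀ (x : EuclideanSpace ℝ (Fin 2)) (t : ℝ),
      HasDerivAt (fun s => δ s x * F (x + s • θ x) s) (G' t x) t := by
    intro x t
    exact (hG2 x t).mul (hG1 x t)
  -- bound
  set B : ℝ := (2*CL + 4*CL^2) * CFv + 2 * (CF * (Cθ + 1)) with hBdef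
  have hbound : ∀ x ∈ Ω, ∀ t ∈ ball (0:ℝ) ε, ‖G' t x‖ ≤ B := by
    intro x hx t ht
    have htm := hmem x hx t ht
    have ht1 : |t| ≤ 1 := by
      rw [mem_ball, dist_zero_right, Real.norm_eq_abs] at ht
      exact ht.le.trans hε1
    have hv1 : |vdiv θ x + 2 * t * q x| ≤ 2*CL + 4*CL^2 := by
      calc |vdiv θ x + 2 * t * q x| ≤ |vdiv θ x| + |2 * t * q x| := abs_add_le _ _
        _ ≤ 2*CL + 4*CL^2 := by
            have h2 : |2 * t * q x| ≤ 4*CL^2 := by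
              rw [abs_mul, abs_mul, abs_two]
              calc 2 * |t| * |q x| ≤ 2 * 1 * (2*CL^2) := by
                    apply mul_le_mul _ (hqb x) (abs_nonneg _) (by norm_num)
                    apply mul_le_mul_of_nonneg_left ht1 (by norm_num)
                _ = 4*CL^2 := by ring
            exact add_le_add (hvb x) h2
    have hv2 : |F (x + t • θ x) t| ≤ CFv := hCFv _ htm
    have hv3 : |δ t x| ≤ 2 := hδle t ht x
    have hv4 : |fderiv ℝ Fp (x + t • θ x, t) (θ x, 1)| ≤ CF * (Cθ + 1) := by
      calc |fderiv ℝ Fp (x + t • θ x, t) (θ x, 1)|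
          ≤ ‖fderiv ℝ Fp (x + t • θ x, t)‖ * ‖((θ x, 1) : EuclideanSpace ℝ (Fin 2) × ℝ)‖ :=
            (fderiv ℝ Fp (x + t • θ x, t)).le_opNorm _
        _ ≤ CF * (Cθ + 1) := by
            apply mul_le_mul (hCF _ htm) _ (norm_nonneg _) hCF0
            rw [Prod.norm_def]
            apply max_le
            · simp only; linarith [hCθ x]
            · simp only [Real.norm_eq_abs, abs_one]; linarith
    calc ‖G' t x‖ ≤ |(vdiv θ x + 2 * t * q x) * F (x + t • θ x) t|
          + |δ t x * fderiv ℝ Fp (x + t • θ x, t) (θ x, 1)| := abs_add_le _ _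
      _ ≤ (2*CL + 4*CL^2) * CFv + 2 * (CF * (Cθ + 1)) := by
          rw [abs_mul, abs_mul]
          exact add_le_add
            (mul_le_mul hv1 hv2 (abs_nonneg _) (by positivity))
            (mul_le_mul hv3 hv4 (abs_nonneg _) (by norm_num))
      _ = B := hBdef.symm
  -- measurability of G' 0
  have hG'c : Continuous fun x => G' 0 x := by
    simp only [hG'def]
    apply Continuous.add
    · exact ((hvc.add ((continuous_const.mul continuous_const).mul hqc))).mul
        (hFpc.comp ((hΦc 0).prodMk continuous_const))
    · exact (hδc 0).mul
        (((hF.continuous_fderiv one_ne_zero).comp ((hΦc 0).prodMk continuous_const)).clm_apply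
          (hθ.continuous.prodMk continuous_const))
  -- dominated differentiation
  have hmain := hasDerivAt_integral_of_dominated_loc_of_deriv_le (μ := volume.restrict Ω)
      (F := fun t x => δ t x * F (x + t • θ x) t) (F' := G') (x₀ := (0:ℝ))
      (bound := fun _ => B) (Metric.ball_mem_nhds 0 hε)
      (Filter.Eventually.of_forall fun t => ((hGc t).aestronglyMeasurable).restrict)
      (((hGc 0).continuousOn.integrableOn_compact hΩcc).mono_set subset_closure)
      (hG'c.aestronglyMeasurable.restrict)
      ((ae_restrict_iff' hΩo.measurableSet).2 (Filter.Eventually.of_forall hbound))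
      (integrableOn_const hΩfin.ne)
      (Filter.Eventually.of_forall fun x t _ => hGd x t)
  have hJd : HasDerivAt J (∫ x in Ω, G' 0 x) 0 := by
    rw [hJdef]
    exact hmain.2
  have hfinal : (∫ x in Ω,
      (deriv (fun t => F x t) 0 + ⟪gradient (fun y => F y 0) x, θ x⟫ + F x 0 * vdiv θ x))
      = ∫ x in Ω, G' 0 x := by
    refine integral_congr_ae (Filter.Eventually.of_forall fun x => ?_)
    have hgd := grad_decomp F hF x (θ x)
    dsimp only
    rw [hgd]
    simp only [hG'def, hδdef, hFp, zero_smul, add_zero, mul_zero, zero_mul, one_mul,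
      ne_eq, OfNat.ofNat_ne_zero, not_false_eq_true, zero_pow]
    ring
  rw [hfinal]
  exact hJd.congr_of_eventuallyEq (Filter.eventuallyEq_of_mem (Metric.ball_mem_nhds 0 hε) hIJ)
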